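/- For every integer r ≥ 2, the presented group ⟨x, y | xyx = yxy, x^r = y^(r-1)⟩ is trivial. -/

import Mathlib

theorem stmt_6 (r : ℕ) (hr : 2 ≤ r) :
    Subsingleton (PresentedGroup
      ({(FreeGroup.of 0 * FreeGroup.of 1 * FreeGroup.of 0) *
          (FreeGroup.of 1 * FreeGroup.of 0 * FreeGroup.of 1)⁻¹,
        FreeGroup.of 0 ^ r * (FreeGroup.of 1 ^ (r - 1))⁻¹} : Set (FreeGroup (Fin 2)))) := by
  set rels : Set (FreeGroup (Fin 2)) :=
    {(FreeGroup.of 0 * FreeGroup.of 1 * FreeGroup.of 0) *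
        (FreeGroup.of 1 * FreeGroup.of 0 * FreeGroup.of 1)⁻¹,
      FreeGroup.of 0 ^ r * (FreeGroup.of 1 ^ (r - 1))⁻¹} with hrels
  set π : FreeGroup (Fin 2) →* PresentedGroup rels := PresentedGroup.mk rels with hπ
  have hone : ∀ w ∈ rels, π w = 1 := by
    intro w hw
    exact (QuotientGroup.eq_one_iff w).mpr (Subgroup.subset_normalClosure hw)
  set g : PresentedGroup rels := π (FreeGroup.of 0) with hg
  set h : PresentedGroup rels := π (FreeGroup.of 1) with hh
  have hb : g * h * g = h * g * h := by
    have := hone _ (Set.mem_insert _ _)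
    simp only [map_mul, map_inv, ← hg, ← hh] at this
    rw [mul_inv_eq_one] at this
    exact this
  have hp : g ^ r = h ^ (r - 1) := by
    have := hone _ (Set.mem_insert_iff.mpr (Or.inr rfl))
    simp only [map_mul, map_inv, map_pow, ← hg, ← hh] at this
    rw [mul_inv_eq_one] at this
    exact this
  -- conjugation: (g*h) * g * (g*h)⁻¹ = h
  have hc : (g * h) * g * (g * h)⁻¹ = h := by
    rw [mul_inv_rev, show g * h * g = h * g * h from hb]
    group
  have hcpow : h ^ (r - 1) = (g * h) * g ^ (r - 1) * (g * h)⁻¹ := by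
    rw [← conj_pow, hc]
  have h3 : g ^ r = h * g ^ (r - 1) * h⁻¹ := by
    have : g ^ r = g * (h * g ^ (r - 1) * h⁻¹) * g⁻¹ := by
      rw [hp, hcpow]; group
    have h4 : g⁻¹ * g ^ r * g = h * g ^ (r - 1) * h⁻¹ := by
      rw [this]; group
    rw [← h4]; group
  have hcomm : h * g ^ r * h⁻¹ = g ^ r := by
    rw [hp]; group
  have hgr : g ^ r = g ^ (r - 1) * g := by
    conv_lhs => rw [show r = (r - 1) + 1 by omega]
    rw [pow_succ]
  have hkey : h * g * h⁻¹ = 1 := by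
    have : g ^ r = g ^ r * (h * g * h⁻¹) := by
      calc g ^ r = h * g ^ r * h⁻¹ := hcomm.symm
        _ = (h * g ^ (r - 1) * h⁻¹) * (h * g * h⁻¹) := by rw [hgr]; group
        _ = g ^ r * (h * g * h⁻¹) := by rw [← h3]
    exact left_eq_mul.mp this
  have hg1 : g = 1 := by
    have := hkey
    rw [mul_inv_eq_one] at this
    exact mul_left_cancel this
  have hh1 : h = 1 := by
    have := hb
    simp only [hg1, one_mul, mul_one] at this
    exact right_eq_mul.mp this
  constructor
  intro a b
  obtain ⟨wa, rfl⟩ := PresentedGroup.mk_surjective rels a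
  obtain ⟨wb, rfl⟩ := PresentedGroup.mk_surjective rels b
  have : π = 1 := FreeGroup.ext_hom π 1 (by
    intro i
    fin_cases i
    · exact hg1
    · exact hh1)
  show π wa = π wb
  rw [this]; rfl
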